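/- arXiv:2603.04629 — 3 statements merged into one kernel-verified Lean document; each statement's English description precedes it below -/
import Mathlib

section
/- For every measurable function $f$ on $[0,1]$, the quantity $\|f\|_{\varphi,\psi}$ coincides with the infimum of $\sum_{n=1}^\infty \psi(n)\,\|f_n\|_\infty\,\varphi(\|f_n\|_1/\|f_n\|_\infty)$ taken over all sequences $\{f_n\}_{n=1}^\infty\subset L^\infty[0,1]$ (no sign restriction) such that $f=\sum_{n=1}^\infty f_n$ almost everywhere. -/
open MeasureTheory ENNReal Set Filter Topology

noncomputable section

/-- Lebesgue measure restricted to the interval `[0,1]`. -/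
def μ01 : Measure ℝ := volume.restrict (Set.Icc 0 1)

/-- `φ : [0,1] → [0,∞)` is concave, non-decreasing, and vanishes only at the origin. -/
structure IsPhi (φ : ℝ → ℝ) : Prop where
  concave : ConcaveOn ℝ (Set.Icc 0 1) φ
  mono : MonotoneOn φ (Set.Icc 0 1)
  zero : φ 0 = 0
  pos : ∀ t : ℝ, 0 < t → t ≤ 1 → 0 < φ t

/-- `ψ : [0,∞) → [0,∞)` is concave, non-decreasing, and vanishes only at the origin. -/
structure IsPsi (ψ : ℝ → ℝ) : Prop where
  concave : ConcaveOn ℝ (Set.Ici 0) ψ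
  mono : MonotoneOn ψ (Set.Ici 0)
  zero : ψ 0 = 0
  pos : ∀ t : ℝ, 0 < t → 0 < ψ t

/-- A sequence `g` of nonnegative `L^∞` functions with `|f| ≤ ∑ₙ gₙ` a.e. -/
def Admissible (f : ℝ → ℝ) (g : ℕ → ℝ → ℝ) : Prop :=
  (∀ n, AEMeasurable (g n) μ01) ∧
  (∀ n, eLpNorm (g n) ⊤ μ01 < ⊤) ∧
  (∀ n x, 0 ≤ g n x) ∧
  (∀ᵐ x ∂μ01, ENNReal.ofReal |f x| ≤ ∑' n : ℕ, ENNReal.ofReal (g n x))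

/-- The cost `∑ₙ ψ(n) ‖gₙ‖_∞ φ(‖gₙ‖₁/‖gₙ‖_∞)` of a decomposition (index shifted by 1;
`0/0 = 0` by the `ℝ≥0∞` division convention, and `φ 0 = 0`). -/
def seqCost (φ ψ : ℝ → ℝ) (g : ℕ → ℝ → ℝ) : ℝ≥0∞ :=
  ∑' n : ℕ, ENNReal.ofReal
    (ψ ((n : ℝ) + 1) * (eLpNorm (g n) ⊤ μ01).toReal *
      φ ((eLpNorm (g n) 1 μ01 / eLpNorm (g n) ⊤ μ01).toReal))

/-- The quasi-norm `‖f‖_{φ,ψ}` (equal to `∞` when no admissible decomposition exists). -/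
def QANorm (φ ψ : ℝ → ℝ) (f : ℝ → ℝ) : ℝ≥0∞ :=
  ⨅ (g : ℕ → ℝ → ℝ) (_ : Admissible f g), seqCost φ ψ g

/-- Membership in the space `QA_{φ,ψ}`. -/
def MemQA (φ ψ : ℝ → ℝ) (f : ℝ → ℝ) : Prop :=
  AEMeasurable f μ01 ∧ QANorm φ ψ f < ⊤

/-- The decreasing rearrangement `f*` of `f` on `[0,1]`. -/
def decRearr (f : ℝ → ℝ) (t : ℝ) : ℝ :=
  sInf {s : ℝ | 0 ≤ s ∧ μ01 {x | s < |f x|} ≤ ENNReal.ofReal t}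

/-- The limit `ζ(0⁺)` of a non-decreasing function `ζ` on `[0,1]`. -/
def limZero (ζ : ℝ → ℝ) : ℝ := sInf (ζ '' Set.Ioc 0 1)

/-- The Lorentz norm `‖f‖_{Λ_ζ} = ∫₀¹ f* dζ = ‖f‖_∞ ζ(0⁺) + ∫₀¹ f*(s) ζ'(s) ds`
(for `ζ` concave the derivative exists a.e. and `ζ` is absolutely continuous on `(0,1]`). -/
def lorentzNorm (ζ : ℝ → ℝ) (f : ℝ → ℝ) : ℝ≥0∞ :=
  eLpNorm f ⊤ μ01 * ENNReal.ofReal (limZero ζ) +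
    ∫⁻ s in Set.Ioc (0:ℝ) 1, ENNReal.ofReal (decRearr f s * deriv ζ s)

/-- Membership in the Lorentz space `Λ_ζ`. -/
def MemLorentz (ζ : ℝ → ℝ) (f : ℝ → ℝ) : Prop :=
  AEMeasurable f μ01 ∧ lorentzNorm ζ f < ⊤

/-- The quasi-concave function `φ_s(t) = inf_n max{sₙ,t} (φ(sₙ)/sₙ) ψ(n)` (index shifted by 1). -/
def phiSeq (φ ψ : ℝ → ℝ) (s : ℕ → ℝ) (t : ℝ) : ℝ :=
  if t = 0 then 0 else ⨅ n : ℕ, max (s n) t * (φ (s n) / s n) * ψ ((n : ℝ) + 1)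

/-- The function `τ(t) = φ(t) ψ(logbar(φ(t)/t))` with `logbar t = 1 + log⁺ t`. -/
def tauF (φ ψ : ℝ → ℝ) (t : ℝ) : ℝ :=
  if t = 0 then 0 else φ t * ψ (1 + max (Real.log (φ t / t)) 0)

/-- A sequence of (not necessarily nonnegative) `L^∞` functions with `f = ∑ₙ gₙ` a.e. -/
def AdmissibleEq (f : ℝ → ℝ) (g : ℕ → ℝ → ℝ) : Prop :=
  (∀ n, AEMeasurable (g n) μ01) ∧
  (∀ n, eLpNorm (g n) ⊤ μ01 < ⊤) ∧
  (∀ᵐ x ∂μ01, HasSum (fun n : ℕ => g n x) (f x))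

lemma isProb01 : IsProbabilityMeasure μ01 := ⟨by simp [μ01, Real.volume_Icc]⟩

lemma phi_nonneg {φ : ℝ → ℝ} (hφ : IsPhi φ) {t : ℝ} (ht : t ∈ Icc (0:ℝ) 1) : 0 ≤ φ t :=
  hφ.zero ▸ hφ.mono (left_mem_Icc.2 zero_le_one) ht ht.1

lemma phi_smul {φ : ℝ → ℝ} (hφ : IsPhi φ) {t l : ℝ} (ht : t ∈ Icc (0:ℝ) 1)
    (hl0 : 0 ≤ l) (hl1 : l ≤ 1) : l * φ t ≤ φ (l * t) := by
  have := hφ.concave.2 ht (left_mem_Icc.2 zero_le_one) hl0 (by linarith : (0:ℝ) ≤ 1 - l) (by ring)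
  simpa [hφ.zero, smul_eq_mul] using this

lemma real_key {φ : ℝ → ℝ} (hφ : IsPhi φ) {α β Α Β : ℝ}
    (h0α : 0 ≤ α) (hαβ : α ≤ β) (hαΑ : α ≤ Α) (hβΒ : β ≤ Β) (hΑΒ : Α ≤ Β) :
    β * φ (α / β) ≤ Β * φ (Α / Β) := by
  have h0Α : 0 ≤ Α := le_trans h0α hαΑ
  have h0Β : 0 ≤ Β := le_trans (le_trans h0α hαβ) hβΒ
  have hr2 : Α / Β ∈ Icc (0:ℝ) 1 := by
    rcases eq_or_lt_of_le h0Β with h | h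
    · constructor <;> simp [← h]
    · exact ⟨div_nonneg h0Α h0Β, (div_le_one h).2 hΑΒ⟩
  rcases eq_or_lt_of_le (le_trans h0α hαβ) with hβ | hβ
  · have : β * φ (α / β) = 0 := by
      have : α = 0 := le_antisymm (hβ ▸ hαβ) h0α
      simp [← hβ]
    rw [this]
    exact mul_nonneg h0Β (phi_nonneg hφ hr2)
  · have hΒpos : 0 < Β := lt_of_lt_of_le hβ hβΒ
    have hr1 : α / β ∈ Icc (0:ℝ) 1 := ⟨div_nonneg h0α hβ.le, (div_le_one hβ).2 hαβ⟩
    have hl0 : 0 ≤ β / Β := div_nonneg hβ.le h0Β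
    have hl1 : β / Β ≤ 1 := (div_le_one hΒpos).2 hβΒ
    have step1 : (β / Β) * φ (α / β) ≤ φ (α / Β) := by
      have := phi_smul hφ hr1 hl0 hl1
      have heq : (β / Β) * (α / β) = α / Β := by field_simp
      rwa [heq] at this
    have hr1' : α / Β ∈ Icc (0:ℝ) 1 :=
      ⟨div_nonneg h0α h0Β, (div_le_one hΒpos).2 (le_trans hαΑ hΑΒ)⟩
    have step2 : φ (α / Β) ≤ φ (Α / Β) :=
      hφ.mono hr1' hr2 (div_le_div_of_nonneg_right hαΑ hΒpos.le)
    calc β * φ (α / β) = Β * ((β / Β) * φ (α / β)) := by field_simp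
      _ ≤ Β * φ (α / Β) := mul_le_mul_of_nonneg_left step1 h0Β
      _ ≤ Β * φ (Α / Β) := mul_le_mul_of_nonneg_left step2 h0Β

lemma ennreal_key {φ : ℝ → ℝ} (hφ : IsPhi φ) {a b A B : ℝ≥0∞}
    (hab : a ≤ b) (haA : a ≤ A) (hbB : b ≤ B) (hAB : A ≤ B) (hB : B ≠ ⊤) :
    b.toReal * φ ((a / b).toReal) ≤ B.toReal * φ ((A / B).toReal) := by
  have hb : b ≠ ⊤ := ne_top_of_le_ne_top hB hbB
  have hA : A ≠ ⊤ := ne_top_of_le_ne_top hB hAB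
  have ha : a ≠ ⊤ := ne_top_of_le_ne_top hb hab
  rw [ENNReal.toReal_div, ENNReal.toReal_div]
  exact real_key hφ toReal_nonneg (toReal_mono hb hab) (toReal_mono hA haA)
    (toReal_mono hB hbB) (toReal_mono hB hAB)

lemma eLpNorm_abs_eq (u : ℝ → ℝ) (p : ℝ≥0∞) :
    eLpNorm (fun x => |u x|) p μ01 = eLpNorm u p μ01 := by
  simpa [Real.norm_eq_abs] using eLpNorm_norm (p := p) (μ := μ01) u

lemma dir1 {φ ψ : ℝ → ℝ} (f : ℝ → ℝ) (g : ℕ → ℝ → ℝ) (hg : AdmissibleEq f g) :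
    QANorm φ ψ f ≤ seqCost φ ψ g := by
  obtain ⟨hmeas, hfin, hsum⟩ := hg
  have hadm : Admissible f (fun n x => |g n x|) := by
    refine ⟨fun n => (continuous_abs.measurable.comp_aemeasurable (hmeas n)), fun n => by rw [eLpNorm_abs_eq]; exact hfin n,
      fun n x => abs_nonneg _, ?_⟩
    filter_upwards [hsum] with x hx
    by_cases hs : Summable (fun n => |g n x|)
    · have h1 : |f x| ≤ ∑' n, |g n x| := by
        have hs' : Summable (fun n => ‖g n x‖) := by simpa [Real.norm_eq_abs] using hs
        have h2 := norm_tsum_le_tsum_norm hs'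
        rw [← hx.tsum_eq]
        simpa [Real.norm_eq_abs] using h2
      calc ENNReal.ofReal |f x| ≤ ENNReal.ofReal (∑' n, |g n x|) := ENNReal.ofReal_le_ofReal h1
        _ = ∑' n, ENNReal.ofReal |g n x| :=
          ENNReal.ofReal_tsum_of_nonneg (fun n => abs_nonneg _) hs
    · have : ∑' n, ENNReal.ofReal |g n x| = ⊤ := by
        by_contra hne
        exact hs (by simpa [abs_nonneg] using ENNReal.summable_toReal hne)
      simp [this]
  have hcost : seqCost φ ψ (fun n x => |g n x|) = seqCost φ ψ g := by
    unfold seqCost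
    congr 1
    ext n
    rw [eLpNorm_abs_eq, eLpNorm_abs_eq]
  calc QANorm φ ψ f ≤ seqCost φ ψ (fun n x => |g n x|) := iInf₂_le _ hadm
    _ = seqCost φ ψ g := hcost

/-- Sign helper -/
def sg : ℝ → ℝ := fun t => if t < 0 then -1 else if 0 < t then 1 else 0

lemma sg_measurable : Measurable sg := by
  unfold sg
  exact Measurable.ite (measurableSet_lt measurable_id measurable_const) measurable_const
    (Measurable.ite (measurableSet_lt measurable_const measurable_id) measurable_const
      measurable_const)

lemma sg_abs (t : ℝ) : sg t * |t| = t := by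
  rcases lt_trichotomy t 0 with h | h | h
  · simp [sg, h, abs_of_neg h, not_lt.2 h.le]
  · simp [sg, h]
  · simp [sg, h, abs_of_pos h, not_lt.2 h.le]

lemma sg_le_one (t : ℝ) : |sg t| ≤ 1 := by
  rcases lt_trichotomy t 0 with h | h | h <;> simp [sg, h, not_lt.2 h.le]

lemma dir2 {φ ψ : ℝ → ℝ} (hφ : IsPhi φ) (hψ : IsPsi ψ) (f : ℝ → ℝ)
    (hf : AEMeasurable f μ01) (g : ℕ → ℝ → ℝ) (hg : Admissible f g) :
    ∃ h : ℕ → ℝ → ℝ, AdmissibleEq f h ∧ seqCost φ ψ h ≤ seqCost φ ψ g := by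
  obtain ⟨hmeas, hfin, hnn, hae⟩ := hg
  set S : ℕ → ℝ → ℝ := fun n x => ∑ k ∈ Finset.range n, g k x with hS
  set F : ℕ → ℝ → ℝ := fun n x => min |f x| (S n x) with hF
  set h : ℕ → ℝ → ℝ := fun n x => sg (f x) * (F (n + 1) x - F n x) with hh
  -- pointwise bound |h n x| ≤ g n x
  have hdiff_nonneg : ∀ n x, 0 ≤ F (n + 1) x - F n x := by
    intro n x
    have : S n x ≤ S (n + 1) x := by
      simp only [hS, Finset.sum_range_succ]
      exact le_add_of_nonneg_right (hnn n x)
    exact sub_nonneg.2 (min_le_min le_rfl this)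
  have hdiff_le : ∀ n x, F (n + 1) x - F n x ≤ g n x := by
    intro n x
    have h1 : F (n + 1) x ≤ F n x + g n x := by
      have : S (n + 1) x = S n x + g n x := by simp [hS, Finset.sum_range_succ]
      calc F (n + 1) x = min |f x| (S n x + g n x) := by rw [hF]; simp [this]
        _ ≤ min (|f x| + g n x) (S n x + g n x) :=
          min_le_min (le_add_of_nonneg_right (hnn n x)) le_rfl
        _ = F n x + g n x := by rw [min_add_add_right]
    linarith
  have hbound : ∀ n x, |h n x| ≤ g n x := by
    intro n x
    have : |h n x| = |sg (f x)| * |F (n + 1) x - F n x| := by rw [hh]; exact abs_mul _ _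
    rw [this, abs_of_nonneg (hdiff_nonneg n x)]
    calc |sg (f x)| * (F (n + 1) x - F n x) ≤ 1 * (F (n + 1) x - F n x) :=
        mul_le_mul_of_nonneg_right (sg_le_one _) (hdiff_nonneg n x)
      _ = F (n + 1) x - F n x := one_mul _
      _ ≤ g n x := hdiff_le n x
  have hnorm_le : ∀ n (p : ℝ≥0∞), eLpNorm (h n) p μ01 ≤ eLpNorm (g n) p μ01 := by
    intro n p
    apply eLpNorm_mono
    intro x
    rw [Real.norm_eq_abs, Real.norm_eq_abs, abs_of_nonneg (hnn n x)]
    exact hbound n x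
  -- measurability
  have hSmeas : ∀ n, AEMeasurable (S n) μ01 := fun n =>
    Finset.aemeasurable_fun_sum _ (fun k _ => hmeas k)
  have hFmeas : ∀ n, AEMeasurable (F n) μ01 := fun n =>
    AEMeasurable.min (continuous_abs.measurable.comp_aemeasurable hf) (hSmeas n)
  have hhmeas : ∀ n, AEMeasurable (h n) μ01 := fun n =>
    ((sg_measurable.comp_aemeasurable hf).mul ((hFmeas (n + 1)).sub (hFmeas n)))
  refine ⟨h, ⟨hhmeas, fun n => lt_of_le_of_lt (hnorm_le n ⊤) (hfin n), ?_⟩, ?_⟩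
  · -- a.e. HasSum
    filter_upwards [hae] with x hx
    set c := |f x| with hc
    have hc0 : 0 ≤ c := abs_nonneg _
    have hpartial : ∀ N, ∑ k ∈ Finset.range N, (F (k + 1) x - F k x) = F N x := by
      intro N
      rw [Finset.sum_range_sub (fun n => F n x)]
      simp [hF, hS, min_eq_right hc0]
    have hFle : ∀ N, F N x ≤ c := fun N => min_le_left _ _
    have hsd : Summable (fun n => F (n + 1) x - F n x) :=
      summable_of_sum_range_le (fun n => hdiff_nonneg n x)
        (fun N => (hpartial N) ▸ hFle N)
    have hFtend : Tendsto (fun N => F N x) atTop (𝓝 c) := by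
      by_cases hs : Summable (fun n => g n x)
      · have hT : c ≤ ∑' n, g n x := by
          have := ENNReal.ofReal_tsum_of_nonneg (fun n => hnn n x) hs
          rw [← this] at hx
          exact (ENNReal.ofReal_le_ofReal_iff (tsum_nonneg (fun n => hnn n x))).1 hx
        have hStend : Tendsto (fun N => S N x) atTop (𝓝 (∑' n, g n x)) :=
          hs.hasSum.tendsto_sum_nat
        have := tendsto_const_nhds.min hStend (f := fun _ : ℕ => c)
        rwa [min_eq_left hT] at this
      · have hStend : Tendsto (fun N => S N x) atTop atTop :=
          (not_summable_iff_tendsto_nat_atTop_of_nonneg (fun n => hnn n x)).1 hs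
        have hev : ∀ᶠ N in atTop, F N x = c := by
          filter_upwards [hStend.eventually_ge_atTop c] with N hN
          exact min_eq_left hN
        exact Tendsto.congr' (hev.mono fun N hN => hN.symm) tendsto_const_nhds
    have hsumh : Summable (fun n => h n x) := by
      simpa [hh] using hsd.mul_left (sg (f x))
    rw [hsumh.hasSum_iff_tendsto_nat]
    have : ∀ N, ∑ i ∈ Finset.range N, h i x = sg (f x) * F N x := by
      intro N
      simp only [hh, ← Finset.mul_sum]
      rw [hpartial N]
    rw [funext this]
    have := hFtend.const_mul (sg (f x))
    simpa [hc, sg_abs (f x)] using this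
  · -- cost comparison
    haveI := isProb01
    apply ENNReal.tsum_le_tsum
    intro n
    apply ENNReal.ofReal_le_ofReal
    rw [mul_assoc, mul_assoc]
    have hψnn : 0 ≤ ψ ((n : ℝ) + 1) := by
      have := hψ.mono (le_refl (0:ℝ)) (by positivity : (0:ℝ) ≤ (n : ℝ) + 1) (by positivity)
      simpa [hψ.zero] using this
    apply mul_le_mul_of_nonneg_left _ hψnn
    exact ennreal_key hφ
      (eLpNorm_le_eLpNorm_of_exponent_le le_top (hhmeas n).aestronglyMeasurable)
      (hnorm_le n 1)
      (hnorm_le n ⊤)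
      (eLpNorm_le_eLpNorm_of_exponent_le le_top (hmeas n).aestronglyMeasurable)
      (hfin n).ne

/-- `‖f‖_{φ,ψ}` equals the infimum of the same cost over all decompositions
`f = ∑ₙ fₙ` a.e. by arbitrary (signed) `L^∞` functions. -/
theorem stmt0 {φ ψ : ℝ → ℝ} (hφ : IsPhi φ) (hψ : IsPsi ψ)
    (f : ℝ → ℝ) (hf : AEMeasurable f μ01) :
    QANorm φ ψ f = ⨅ (g : ℕ → ℝ → ℝ) (_ : AdmissibleEq f g), seqCost φ ψ g := by
  apply le_antisymm
  · exact le_iInf₂ fun g hg => dir1 f g hg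
  · rw [QANorm]
    apply le_iInf₂
    intro g hg
    obtain ⟨h, hh, hcost⟩ := dir2 hφ hψ f hf g hg
    exact (iInf₂_le h hh).trans hcost
end
end

section
/- The functional $\|\cdot\|_{\varphi,\psi}$ satisfies the quasi-triangle inequality with constant $4$: for all $f_1,f_2\in QA_{\varphi,\psi}$, $\|f_1+f_2\|_{\varphi,\psi}\le 4\,(\|f_1\|_{\varphi,\psi}+\|f_2\|_{\varphi,\psi})$. -/
open MeasureTheory ENNReal Set Filter Topology

noncomputable section

instance : IsProbabilityMeasure μ01 := ⟨by simp [μ01, Real.volume_Icc]⟩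

lemma psi_nonneg' {ψ : ℝ → ℝ} (hψ : IsPsi ψ) {t : ℝ} (ht : 0 ≤ t) : 0 ≤ ψ t := by
  calc (0:ℝ) = ψ 0 := hψ.zero.symm
    _ ≤ ψ t := hψ.mono (mem_Ici.2 le_rfl) (mem_Ici.2 ht) ht

lemma psi_two_mul' {ψ : ℝ → ℝ} (hψ : IsPsi ψ) {t : ℝ} (ht : 0 ≤ t) : ψ (2 * t) ≤ 2 * ψ t := by
  have h := hψ.concave.2 (mem_Ici.2 (by linarith : (0:ℝ) ≤ 2 * t)) (mem_Ici.2 le_rfl)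
    (by norm_num : (0:ℝ) ≤ 1/2) (by norm_num : (0:ℝ) ≤ 1/2) (by norm_num)
  simp only [smul_eq_mul] at h
  have h2 : (1/2:ℝ) * (2 * t) + 1/2 * 0 = t := by ring
  rw [h2] at h
  have h0 := hψ.zero
  linarith

lemma phiR_nonneg' {φ : ℝ → ℝ} (hφ : IsPhi φ) (u : ℝ → ℝ) (hu : AEMeasurable u μ01) :
    0 ≤ φ ((eLpNorm u 1 μ01 / eLpNorm u ⊤ μ01).toReal) := by
  have hle : eLpNorm u 1 μ01 ≤ eLpNorm u ⊤ μ01 :=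
    eLpNorm_le_eLpNorm_of_exponent_le le_top hu.aestronglyMeasurable
  have hdiv : eLpNorm u 1 μ01 / eLpNorm u ⊤ μ01 ≤ 1 :=
    ENNReal.div_le_of_le_mul (by simpa using hle)
  have hr1 : (eLpNorm u 1 μ01 / eLpNorm u ⊤ μ01).toReal ≤ 1 := by
    have := ENNReal.toReal_mono (by simp) hdiv
    simpa using this
  have h0r : (0:ℝ) ≤ (eLpNorm u 1 μ01 / eLpNorm u ⊤ μ01).toReal := ENNReal.toReal_nonneg
  have := hφ.mono (show (0:ℝ) ∈ Icc 0 1 by norm_num) ⟨h0r, hr1⟩ h0r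
  rwa [hφ.zero] at this

lemma term_le' {φ ψ : ℝ → ℝ} (hφ : IsPhi φ) (hψ : IsPsi ψ) (u : ℝ → ℝ)
    (hu : AEMeasurable u μ01) {a b : ℝ} (h0a : 0 ≤ a) (h0b : 0 ≤ b) (hab : a ≤ 2 * b) :
    ENNReal.ofReal (ψ a * (eLpNorm u ⊤ μ01).toReal *
        φ ((eLpNorm u 1 μ01 / eLpNorm u ⊤ μ01).toReal)) ≤
      2 * ENNReal.ofReal (ψ b * (eLpNorm u ⊤ μ01).toReal *
        φ ((eLpNorm u 1 μ01 / eLpNorm u ⊤ μ01).toReal)) := by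
  set c := (eLpNorm u ⊤ μ01).toReal with hc
  set r := φ ((eLpNorm u 1 μ01 / eLpNorm u ⊤ μ01).toReal) with hr
  have hφr : 0 ≤ r := phiR_nonneg' hφ u hu
  have hc0 : 0 ≤ c := ENNReal.toReal_nonneg
  have h1 : ψ a ≤ 2 * ψ b :=
    (hψ.mono (mem_Ici.2 h0a) (mem_Ici.2 (by linarith)) hab).trans (psi_two_mul' hψ h0b)
  refine le_trans (ENNReal.ofReal_le_ofReal
    (mul_le_mul_of_nonneg_right (mul_le_mul_of_nonneg_right h1 hc0) hφr)) (le_of_eq ?_)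
  rw [show 2 * ψ b * c * r = 2 * (ψ b * c * r) from by ring,
    ENNReal.ofReal_mul (by norm_num : (0:ℝ) ≤ 2), ENNReal.ofReal_ofNat]

lemma qa_core' {φ ψ : ℝ → ℝ} (hφ : IsPhi φ) (hψ : IsPsi ψ) (f₁ f₂ : ℝ → ℝ) (g h : ℕ → ℝ → ℝ)
    (hg : Admissible f₁ g) (hh : Admissible f₂ h) :
    QANorm φ ψ (f₁ + f₂) ≤ 2 * (seqCost φ ψ g + seqCost φ ψ h) := by
  classical
  set k : ℕ → ℝ → ℝ := fun n => if n % 2 = 0 then g (n / 2) else h (n / 2) with hk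
  have hk2 : ∀ m, k (2 * m) = g m := fun m => by
    simp only [hk]
    rw [if_pos (by omega : 2 * m % 2 = 0), show 2 * m / 2 = m from by omega]
  have hk2' : ∀ m, k (2 * m + 1) = h m := fun m => by
    simp only [hk]
    rw [if_neg (by omega : ¬ (2 * m + 1) % 2 = 0),
      show (2 * m + 1) / 2 = m from by omega]
  have hadm : Admissible (f₁ + f₂) k := by
    refine ⟨fun n => ?_, fun n => ?_, fun n x => ?_, ?_⟩
    · simp only [hk]; split_ifs; exacts [hg.1 _, hh.1 _]
    · simp only [hk]; split_ifs; exacts [hg.2.1 _, hh.2.1 _]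
    · simp only [hk]; split_ifs; exacts [hg.2.2.1 _ _, hh.2.2.1 _ _]
    · filter_upwards [hg.2.2.2, hh.2.2.2] with x h1 h2
      have hsum : (∑' n : ℕ, ENNReal.ofReal (k n x)) =
          (∑' m : ℕ, ENNReal.ofReal (g m x)) + ∑' m : ℕ, ENNReal.ofReal (h m x) := by
        rw [← tsum_even_add_odd (f := fun n => ENNReal.ofReal (k n x))
          ENNReal.summable ENNReal.summable]
        congr 1
        · exact tsum_congr fun m => by rw [hk2]
        · exact tsum_congr fun m => by rw [hk2']
      calc ENNReal.ofReal |(f₁ + f₂) x| ≤ ENNReal.ofReal (|f₁ x| + |f₂ x|) :=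
            ENNReal.ofReal_le_ofReal (abs_add_le _ _)
        _ = ENNReal.ofReal |f₁ x| + ENNReal.ofReal |f₂ x| :=
            ENNReal.ofReal_add (abs_nonneg _) (abs_nonneg _)
        _ ≤ _ := by rw [hsum]; exact add_le_add h1 h2
  have h0 : QANorm φ ψ (f₁ + f₂) ≤ seqCost φ ψ k := iInf₂_le k hadm
  refine h0.trans ?_
  set c : ℕ → ℝ≥0∞ := fun n => ENNReal.ofReal
    (ψ ((n : ℝ) + 1) * (eLpNorm (k n) ⊤ μ01).toReal *
      φ ((eLpNorm (k n) 1 μ01 / eLpNorm (k n) ⊤ μ01).toReal)) with hcdef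
  have hck : seqCost φ ψ k = (∑' m : ℕ, c (2 * m)) + ∑' m : ℕ, c (2 * m + 1) :=
    (tsum_even_add_odd ENNReal.summable ENNReal.summable).symm
  rw [hck, mul_add]
  refine add_le_add ?_ ?_
  · rw [seqCost, ← ENNReal.tsum_mul_left]
    refine ENNReal.tsum_le_tsum fun m => ?_
    simp only [hcdef]
    rw [hk2]
    exact term_le' hφ hψ (g m) (hg.1 m) (by positivity) (by positivity)
      (by push_cast; linarith)
  · rw [seqCost, ← ENNReal.tsum_mul_left]
    refine ENNReal.tsum_le_tsum fun m => ?_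
    simp only [hcdef]
    rw [hk2']
    exact term_le' hφ hψ (h m) (hh.1 m) (by positivity) (by positivity)
      (by push_cast; linarith)

/-- the quasi-triangle inequality with constant `4`:
`‖f₁ + f₂‖_{φ,ψ} ≤ 4 (‖f₁‖_{φ,ψ} + ‖f₂‖_{φ,ψ})` for `f₁, f₂ ∈ QA_{φ,ψ}`. -/
theorem stmt3 {φ ψ : ℝ → ℝ} (hφ : IsPhi φ) (hψ : IsPsi ψ)
    (f₁ f₂ : ℝ → ℝ) (h₁ : MemQA φ ψ f₁) (h₂ : MemQA φ ψ f₂) :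
    QANorm φ ψ (f₁ + f₂) ≤ 4 * (QANorm φ ψ f₁ + QANorm φ ψ f₂) := by
  obtain ⟨-, hA⟩ := h₁
  obtain ⟨-, hB⟩ := h₂
  set A := QANorm φ ψ f₁ with hAdef
  set B := QANorm φ ψ f₂ with hBdef
  refine ENNReal.le_of_forall_pos_le_add fun ε hε htop => ?_
  set δ : NNReal := ε / 4 with hδdef
  have hδ0 : 0 < δ := div_pos hε (by norm_num)
  have h4δ : (4 : ℝ≥0∞) * (δ : ℝ≥0∞) = (ε : ℝ≥0∞) := by
    have : (4 : NNReal) * δ = ε := by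
      rw [hδdef]; field_simp
    exact_mod_cast congrArg (fun x : NNReal => (x : ℝ≥0∞)) this
  have hA' : A < A + δ := ENNReal.lt_add_right hA.ne (by exact_mod_cast hδ0.ne')
  have hB' : B < B + δ := ENNReal.lt_add_right hB.ne (by exact_mod_cast hδ0.ne')
  rw [hAdef] at hA'
  rw [hBdef] at hB'
  conv_lhs at hA' => rw [QANorm]
  conv_lhs at hB' => rw [QANorm]
  simp only [iInf_lt_iff] at hA' hB'
  obtain ⟨g, hgadm, hgc⟩ := hA'
  obtain ⟨h, hhadm, hhc⟩ := hB'
  calc QANorm φ ψ (f₁ + f₂) ≤ 2 * (seqCost φ ψ g + seqCost φ ψ h) :=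
        qa_core' hφ hψ f₁ f₂ g h hgadm hhadm
    _ ≤ 2 * ((A + δ) + (B + δ)) := mul_le_mul_right (add_le_add hgc.le hhc.le) 2
    _ = (2 * A + 2 * B) + 4 * (δ : ℝ≥0∞) := by ring
    _ ≤ 4 * (A + B) + ε := by
        rw [h4δ, mul_add]
        exact add_le_add_left (add_le_add
          (mul_le_mul_left (by norm_num : (2:ℝ≥0∞) ≤ 4) A)
          (mul_le_mul_left (by norm_num : (2:ℝ≥0∞) ≤ 4) B)) _
end
end

section
/- $QA_{\varphi,\psi}$ is rearrangement invariant: if $f$ and $g$ are measurable functions on $[0,1]$ that are equimeasurable, i.e. $\lambda(\{x:|f(x)|>s\})=\lambda(\{x:|g(x)|>s\})$ for every $s\ge 0$, then $\|f\|_{\varphi,\psi}=\|g\|_{\varphi,\psi}$ (in particular $f\in QA_{\varphi,\psi}$ if and only if $g\in QA_{\varphi,\psi}$). -/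
open MeasureTheory ENNReal Set Filter Topology

noncomputable section

section RyffAux

lemma mu01_univ : μ01 Set.univ = 1 := by
  simp [μ01, Real.volume_Icc]

instance inst_s6 : IsProbabilityMeasure μ01 := ⟨mu01_univ⟩

lemma mu01_le_volume (A : Set ℝ) : μ01 A ≤ volume A :=
  Measure.restrict_le_self A

instance : NullSingletonClass μ01 := by
  constructor
  intro x
  exact le_antisymm ((mu01_le_volume {x}).trans_eq (by simp)) zero_le

lemma mu01_apply (A : Set ℝ) : μ01 A = volume (A ∩ Set.Icc 0 1) :=
  Measure.restrict_apply' measurableSet_Icc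

/-- distribution function -/
def dd (F : ℝ → ℝ) (u : ℝ) : ℝ≥0∞ := μ01 {y | u < F y}

/-- fiber rank -/
def rr (F : ℝ → ℝ) (x : ℝ) : ℝ≥0∞ := μ01 ({y | F y = F x} ∩ Set.Iic x)

/-- the rank map, `ℝ≥0∞`-valued -/
def sHat (F : ℝ → ℝ) (x : ℝ) : ℝ≥0∞ := dd F (F x) + rr F x

/-- the rank map (Ryff's measure-preserving map) -/
def sF (F : ℝ → ℝ) (x : ℝ) : ℝ := (sHat F x).toReal

lemma dd_anti (F : ℝ → ℝ) : Antitone (dd F) := fun u v huv =>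
  measure_mono (fun y hy => lt_of_le_of_lt huv hy)

lemma dd_ne_top (F : ℝ → ℝ) (u : ℝ) : dd F u ≠ ⊤ :=
  (measure_lt_top μ01 _).ne

lemma rr_le (F : ℝ → ℝ) (x : ℝ) : rr F x ≤ μ01 {y | F y = F x} :=
  measure_mono Set.inter_subset_left

lemma dd_add_level {F : ℝ → ℝ} (hF : Measurable F) (u : ℝ) :
    dd F u + μ01 {y | F y = u} = μ01 {y | u ≤ F y} := by
  rw [dd, ← measure_union _ (measurableSet_eq_fun hF measurable_const)]
  · congr 1
    ext y
    simp only [Set.mem_union, Set.mem_setOf_eq]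
    constructor
    · rintro (h | h)
      · exact h.le
      · exact h.ge
    · intro h
      rcases lt_or_eq_of_le h with h' | h'
      · exact Or.inl h'
      · exact Or.inr h'.symm
  · intro A hA hA' y hy
    exact absurd ((hA' hy).symm ▸ (hA hy)) (lt_irrefl u)

lemma sHat_le_one {F : ℝ → ℝ} (hF : Measurable F) (x : ℝ) : sHat F x ≤ 1 := by
  calc sHat F x ≤ dd F (F x) + μ01 {y | F y = F x} := add_le_add le_rfl (rr_le F x)
    _ = μ01 {y | F x ≤ F y} := dd_add_level hF (F x)
    _ ≤ μ01 Set.univ := measure_mono (Set.subset_univ _)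
    _ = 1 := mu01_univ

lemma sHat_ne_top {F : ℝ → ℝ} (hF : Measurable F) (x : ℝ) : sHat F x ≠ ⊤ :=
  ((sHat_le_one hF x).trans_lt one_lt_top).ne

lemma ofReal_sF {F : ℝ → ℝ} (hF : Measurable F) (x : ℝ) :
    ENNReal.ofReal (sF F x) = sHat F x :=
  ENNReal.ofReal_toReal (sHat_ne_top hF x)

lemma sF_nonneg (F : ℝ → ℝ) (x : ℝ) : 0 ≤ sF F x := ENNReal.toReal_nonneg

lemma sF_le_one {F : ℝ → ℝ} (hF : Measurable F) (x : ℝ) : sF F x ≤ 1 := by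
  rw [sF, ← ENNReal.toReal_one]
  exact ENNReal.toReal_mono one_ne_top (sHat_le_one hF x)

lemma measurable_ddF {F : ℝ → ℝ} (hF : Measurable F) :
    Measurable (fun x => dd F (F x)) :=
  ((dd_anti F).measurable).comp hF

lemma measurable_rr {F : ℝ → ℝ} (hF : Measurable F) : Measurable (rr F) := by
  have hs : MeasurableSet {q : (ℝ × ℝ) × ℝ | F q.2 = q.1.2 ∧ q.2 ≤ q.1.1} := by
    exact (measurableSet_eq_fun (hF.comp measurable_snd) measurable_fst.snd).inter
      (measurableSet_le measurable_snd measurable_fst.fst)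
  have h1 : Measurable (fun p : ℝ × ℝ => μ01 (Prod.mk p ⁻¹' {q : (ℝ × ℝ) × ℝ | F q.2 = q.1.2 ∧ q.2 ≤ q.1.1})) :=
    measurable_measure_prodMk_left hs
  have h2 : Measurable (fun x : ℝ => ((x, F x) : ℝ × ℝ)) := measurable_id.prodMk hF
  have : rr F = (fun p : ℝ × ℝ => μ01 (Prod.mk p ⁻¹' {q : (ℝ × ℝ) × ℝ | F q.2 = q.1.2 ∧ q.2 ≤ q.1.1})) ∘
      (fun x : ℝ => ((x, F x) : ℝ × ℝ)) := by
    funext x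
    rfl
  rw [this]
  exact h1.comp h2

lemma measurable_sHat {F : ℝ → ℝ} (hF : Measurable F) : Measurable (sHat F) :=
  (measurable_ddF hF).add (measurable_rr hF)

lemma measurable_sF {F : ℝ → ℝ} (hF : Measurable F) : Measurable (sF F) :=
  (measurable_sHat hF).ennreal_toReal

/-- Key "uniform fiber" lemma: the sub-level sets of `x ↦ μ01 (L ∩ Iic x)` within `L`
have exactly measure `c` for `c ≤ μ01 L`. -/
lemma flat_measure {L : Set ℝ} (hL : MeasurableSet L) {c : ℝ≥0∞} (hc : c ≤ μ01 L) :
    μ01 {x | x ∈ L ∧ μ01 (L ∩ Set.Iic x) ≤ c} = c := by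
  set mE : ℝ → ℝ≥0∞ := fun x => μ01 (L ∩ Set.Iic x) with hmE
  have hmE_mono : Monotone mE := fun x y hxy =>
    measure_mono (Set.inter_subset_inter_right _ (Set.Iic_subset_Iic.2 hxy))
  have hmE_ne_top : ∀ x, mE x ≠ ⊤ := fun x => (measure_lt_top μ01 _).ne
  have hL_ne_top : μ01 L ≠ ⊤ := (measure_lt_top μ01 _).ne
  rcases eq_or_lt_of_le hc with hceq | hclt
  · -- c = μ01 L
    have : {x | x ∈ L ∧ mE x ≤ c} = L := by
      ext x
      simp only [Set.mem_setOf_eq]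
      exact ⟨fun h => h.1, fun h => ⟨h, hceq ▸ measure_mono Set.inter_subset_left⟩⟩
    rw [this, hceq]
  · -- c < μ01 L
    set m : ℝ → ℝ := fun x => (mE x).toReal with hm
    have hm_mono : Monotone m := fun x y hxy =>
      ENNReal.toReal_mono (hmE_ne_top y) (hmE_mono hxy)
    have hm_lip : ∀ x y : ℝ, x ≤ y → m y - m x ≤ y - x := by
      intro x y hxy
      have hsplit : mE y = mE x + μ01 (L ∩ Set.Ioc x y) := by
        rw [hmE]
        simp only
        have hU : L ∩ Set.Iic y = (L ∩ Set.Iic x) ∪ (L ∩ Set.Ioc x y) := by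
          rw [← Set.inter_union_distrib_left, Set.Iic_union_Ioc_eq_Iic hxy]
        rw [hU, measure_union _ (hL.inter measurableSet_Ioc)]
        intro A hA hA' z hz
        exact absurd ((hA' hz).2.1) (not_lt.2 (hA hz).2)
      have hIoc : μ01 (L ∩ Set.Ioc x y) ≤ ENNReal.ofReal (y - x) := by
        calc μ01 (L ∩ Set.Ioc x y) ≤ volume (Set.Ioc x y) :=
          (mu01_le_volume _).trans' (measure_mono Set.inter_subset_right)
          _ = ENNReal.ofReal (y - x) := by rw [Real.volume_Ioc]
      have := congrArg ENNReal.toReal hsplit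
      rw [ENNReal.toReal_add (hmE_ne_top x) (measure_lt_top μ01 _).ne] at this
      have h2 : (μ01 (L ∩ Set.Ioc x y)).toReal ≤ y - x := by
        rw [← ENNReal.le_ofReal_iff_toReal_le (measure_lt_top μ01 _).ne (by linarith)]
        exact hIoc
      simp only [hm]
      rw [this]
      linarith
    have hm_cont : Continuous m := by
      apply (LipschitzWith.of_dist_le_mul (K := 1) (f := m) ?_).continuous
      intro x y
      rw [NNReal.coe_one, one_mul, Real.dist_eq, Real.dist_eq]
      rcases le_total x y with h | h
      · rw [abs_of_nonpos (by linarith [hm_mono h] : m x - m y ≤ 0), abs_of_nonpos (by linarith)]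
        have := hm_lip x y h
        linarith
      · rw [abs_of_nonneg (by linarith [hm_mono h] : 0 ≤ m x - m y), abs_of_nonneg (by linarith)]
        have := hm_lip y x h
        linarith
    set cr : ℝ := c.toReal with hcr
    have hcr_nonneg : 0 ≤ cr := ENNReal.toReal_nonneg
    have hcr_lt : cr < (μ01 L).toReal := ENNReal.toReal_strict_mono hL_ne_top hclt
    have hC_ne : c ≠ ⊤ := (hclt.trans (measure_lt_top μ01 L)).ne
    -- S := {x | m x ≤ cr}
    set S : Set ℝ := {x | m x ≤ cr} with hS
    have hS_ne : S.Nonempty := by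
      refine ⟨-1, ?_⟩
      have : mE (-1) = 0 := by
        rw [hmE]
        simp only
        rw [mu01_apply]
        convert measure_empty (μ := volume)
        ext z
        simp only [Set.mem_inter_iff, Set.mem_Iic, Set.mem_Icc, Set.mem_empty_iff_false, iff_false]
        rintro ⟨⟨_, hz⟩, hz0, _⟩
        linarith
      simp only [hS, Set.mem_setOf_eq, hm, this]
      simpa using hcr_nonneg
    have hS_bdd : BddAbove S := by
      refine ⟨1, fun x hx => ?_⟩
      by_contra hx1
      push_neg at hx1
      have : mE 1 ≤ mE x := hmE_mono hx1.le
      have h1 : mE 1 = μ01 L := by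
        rw [hmE]
        simp only
        rw [mu01_apply, mu01_apply]
        congr 1
        ext z
        simp only [Set.mem_inter_iff, Set.mem_Iic, Set.mem_Icc]
        exact ⟨fun h => ⟨h.1.1, h.2⟩, fun h => ⟨⟨h.1, h.2.2⟩, h.2⟩⟩
      have : (μ01 L).toReal ≤ m x := by
        rw [← h1]
        exact ENNReal.toReal_mono (hmE_ne_top x) this
      have := hx
      simp only [hS, Set.mem_setOf_eq] at this
      linarith
    have hS_closed : IsClosed S := IsClosed.preimage hm_cont isClosed_Iic
    set s := sSup S with hs
    have hsS : s ∈ S := hS_closed.csSup_mem hS_ne hS_bdd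
    have hms : m s ≤ cr := hsS
    have hms_ge : cr ≤ m s := by
      by_contra hlt
      push_neg at hlt
      set δ := cr - m s with hδ
      have hδpos : 0 < δ := by simp [hδ]; linarith
      have : s + δ/2 ∈ S := by
        simp only [hS, Set.mem_setOf_eq]
        have := hm_lip s (s + δ/2) (by linarith)
        linarith
      have := le_csSup hS_bdd this
      linarith
    have hmseq : m s = cr := le_antisymm hms hms_ge
    have hset : {x | x ∈ L ∧ mE x ≤ c} = L ∩ Set.Iic s := by
      ext x
      simp only [Set.mem_setOf_eq, Set.mem_inter_iff, Set.mem_Iic]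
      constructor
      · rintro ⟨hxL, hxc⟩
        refine ⟨hxL, ?_⟩
        have : x ∈ S := by
          simp only [hS, Set.mem_setOf_eq, hm]
          exact le_trans (ENNReal.toReal_mono hC_ne hxc) (le_of_eq rfl)
        exact le_csSup hS_bdd this
      · rintro ⟨hxL, hxs⟩
        refine ⟨hxL, ?_⟩
        have hmx : m x ≤ cr := le_trans (hm_mono hxs) hms
        exact (ENNReal.toReal_le_toReal (hmE_ne_top x) hC_ne).mp hmx
    rw [hset]
    have : mE s = c := by
      have := hmseq
      rw [hm, hcr] at this
      exact (ENNReal.toReal_eq_toReal_iff' (hmE_ne_top s) hC_ne).mp this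
    exact this

end RyffAux
section MP

variable {F : ℝ → ℝ}

lemma measurableSet_dd (hF : Measurable F) (u : ℝ) : MeasurableSet {y | u < F y} :=
  measurableSet_lt measurable_const hF

lemma dd_iInf_nat (hF : Measurable F) : ⨅ n : ℕ, dd F (n : ℝ) = 0 := by
  have h1 : ⋂ n : ℕ, {y | (n : ℝ) < F y} = ∅ := by
    ext y
    simp only [Set.mem_iInter, Set.mem_setOf_eq, Set.mem_empty_iff_false, iff_false]
    push_neg
    obtain ⟨n, hn⟩ := exists_nat_gt (F y)
    exact ⟨n, hn.le⟩
  have h2 := Directed.measure_iInter (μ := μ01) (s := fun n : ℕ => {y | (n : ℝ) < F y})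
    (fun n => (measurableSet_dd hF _).nullMeasurableSet)
    (fun m n => ⟨max m n,
      fun y hy => lt_of_le_of_lt (by exact_mod_cast le_max_left m n : (m:ℝ) ≤ (max m n : ℕ)) hy,
      fun y hy => lt_of_le_of_lt (by exact_mod_cast le_max_right m n : (n:ℝ) ≤ (max m n : ℕ)) hy⟩)
    ⟨0, measure_ne_top μ01 _⟩
  rw [h1] at h2
  simp only [measure_empty] at h2
  exact h2.symm

lemma exists_dd_lt (hF : Measurable F) {a : ℝ≥0∞} (ha : 0 < a) : ∃ n : ℕ, dd F (n : ℝ) < a := by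
  have := dd_iInf_nat hF
  rw [← this] at ha
  exact iInf_lt_iff.mp ha

/-- The rank map is measure preserving. -/
lemma map_sF (hF : Measurable F) (hF0 : ∀ x, 0 ≤ F x) :
    Measure.map (sF F) μ01 = μ01 := by
  apply Measure.ext_of_Iic
  intro t
  rw [Measure.map_apply (measurable_sF hF) measurableSet_Iic]
  rcases lt_or_ge t 0 with ht0 | ht0
  · have h1 : sF F ⁻¹' Set.Iic t = ∅ := by
      ext x
      simp only [Set.mem_preimage, Set.mem_Iic, Set.mem_empty_iff_false, iff_false, not_le]
      exact lt_of_lt_of_le ht0 (sF_nonneg F x)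
    have h2 : μ01 (Set.Iic t) = 0 := by
      rw [mu01_apply]
      convert measure_empty (μ := volume)
      ext z
      simp only [Set.mem_inter_iff, Set.mem_Iic, Set.mem_Icc, Set.mem_empty_iff_false, iff_false]
      rintro ⟨hz, hz0, _⟩
      linarith
    rw [h1, h2, measure_empty]
  rcases le_or_gt 1 t with ht1 | ht1
  · have h1 : sF F ⁻¹' Set.Iic t = Set.univ := by
      ext x
      simp only [Set.mem_preimage, Set.mem_Iic, Set.mem_univ, iff_true]
      exact (sF_le_one hF x).trans ht1
    have h2 : μ01 (Set.Iic t) = 1 := by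
      rw [mu01_apply]
      have : Set.Iic t ∩ Set.Icc 0 1 = Set.Icc (0:ℝ) 1 := by
        apply Set.inter_eq_self_of_subset_right
        intro z hz
        exact le_trans hz.2 ht1
      rw [this, Real.volume_Icc]
      norm_num
    rw [h1, h2, mu01_univ]
  -- main case 0 ≤ t < 1
  have hIic : μ01 (Set.Iic t) = ENNReal.ofReal t := by
    rw [mu01_apply]
    have : Set.Iic t ∩ Set.Icc 0 1 = Set.Icc 0 t := by
      ext z
      simp only [Set.mem_inter_iff, Set.mem_Iic, Set.mem_Icc]
      exact ⟨fun h => ⟨h.2.1, h.1⟩, fun h => ⟨h.2, h.1, h.2.trans ht1.le⟩⟩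
    rw [this, Real.volume_Icc, sub_zero]
  set th := ENNReal.ofReal t with hth
  have hth_le_one : th ≤ 1 := ENNReal.ofReal_le_one.2 ht1.le
  have hth_ne_top : th ≠ ⊤ := ENNReal.ofReal_ne_top
  have hpre : sF F ⁻¹' Set.Iic t = {x | sHat F x ≤ th} := by
    ext x
    simp only [Set.mem_preimage, Set.mem_Iic, Set.mem_setOf_eq]
    exact (ENNReal.le_ofReal_iff_toReal_le (sHat_ne_top hF x) ht0).symm
  rw [hpre, hIic]
  set U := {u : ℝ | 0 ≤ u ∧ dd F u ≤ th} with hU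
  rcases Set.eq_empty_or_nonempty U with hUe | hUne
  · -- U empty : th = 0 and set empty
    have hth0 : th = 0 := by
      by_contra h
      obtain ⟨n, hn⟩ := exists_dd_lt hF (pos_iff_ne_zero.2 h)
      exact Set.eq_empty_iff_forall_notMem.1 hUe n ⟨Nat.cast_nonneg n, hn.le⟩
    have hset : {x | sHat F x ≤ th} = ∅ := by
      ext x
      simp only [Set.mem_setOf_eq, Set.mem_empty_iff_false, iff_false, not_le]
      have hx : ¬ dd F (F x) ≤ th := fun h =>
        Set.eq_empty_iff_forall_notMem.1 hUe (F x) ⟨hF0 x, h⟩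
      calc th < dd F (F x) := not_le.1 hx
        _ ≤ sHat F x := le_self_add
    rw [hset, hth0, measure_empty]
  · have hUbdd : BddBelow U := ⟨0, fun u hu => hu.1⟩
    set ut := sInf U with hut
    have hut0 : 0 ≤ ut := le_csInf hUne (fun u hu => hu.1)
    have hdd_ut : dd F ut ≤ th := by
      have hUnion : {y | ut < F y} = ⋃ n : ℕ, {y | ut + 1/(n+1) < F y} := by
        ext y
        simp only [Set.mem_iUnion, Set.mem_setOf_eq]
        constructor
        · intro hy
          obtain ⟨n, hn⟩ := exists_nat_one_div_lt (by linarith : 0 < F y - ut)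
          exact ⟨n, by linarith⟩
        · rintro ⟨n, hn⟩
          have : (0:ℝ) < 1/(n+1) := by positivity
          linarith
      rw [dd, hUnion, Directed.measure_iUnion]
      · refine iSup_le fun n => ?_
        have h1n : (0:ℝ) < 1/(n+1) := by positivity
        obtain ⟨u, huU, hu_lt⟩ := (csInf_lt_iff hUbdd hUne).mp (by linarith : sInf U < ut + 1/(n+1))
        exact le_trans (measure_mono (fun y hy => lt_of_le_of_lt hu_lt.le hy)) huU.2
      · intro m n
        have hcm : ((m:ℝ)+1) ≤ ((max m n : ℕ):ℝ)+1 := by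
          have : (m:ℝ) ≤ ((max m n : ℕ):ℝ) := by exact_mod_cast le_max_left m n
          linarith
        have hcn : ((n:ℝ)+1) ≤ ((max m n : ℕ):ℝ)+1 := by
          have : (n:ℝ) ≤ ((max m n : ℕ):ℝ) := by exact_mod_cast le_max_right m n
          linarith
        refine ⟨max m n, fun y hy => ?_, fun y hy => ?_⟩
        · simp only [Set.mem_setOf_eq] at *
          have := one_div_le_one_div_of_le (by positivity : (0:ℝ) < (m:ℝ)+1) hcm
          linarith
        · simp only [Set.mem_setOf_eq] at *
          have := one_div_le_one_div_of_le (by positivity : (0:ℝ) < (n:ℝ)+1) hcn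
          linarith
    have hbig : th ≤ μ01 {y | ut ≤ F y} := by
      rcases eq_or_lt_of_le hut0 with h0 | h0
      · have : {y | ut ≤ F y} = Set.univ := by
          ext y
          simp only [Set.mem_setOf_eq, Set.mem_univ, iff_true]
          rw [← h0]
          exact hF0 y
        rw [this, mu01_univ]
        exact hth_le_one
      · have hInter : {y | ut ≤ F y} = ⋂ n : ℕ, {y | ut - ut/(n+2) < F y} := by
          ext y
          simp only [Set.mem_iInter, Set.mem_setOf_eq]
          constructor
          · intro hy n
            have : (0:ℝ) < ut/(n+2) := by positivity
            linarith
          · intro hy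
            by_contra hc
            push_neg at hc
            obtain ⟨n, hn⟩ := exists_nat_gt (ut / (ut - F y))
            have hd : 0 < ut - F y := by linarith
            have h1 : ut / (ut - F y) < (n:ℝ) + 2 := by
              have : (n:ℝ) ≤ n + 2 := by linarith
              linarith
            have h2 : ut < ((n:ℝ)+2) * (ut - F y) := by
              rwa [div_lt_iff₀ hd] at h1
            have h3 : ut/((n:ℝ)+2) < ut - F y := by
              rw [div_lt_iff₀ (by positivity : (0:ℝ) < (n:ℝ)+2)]
              linarith [h2]
            have := hy n
            linarith
        rw [hInter, Directed.measure_iInter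
          (fun n => (measurableSet_dd hF _).nullMeasurableSet)
          ?_ ⟨0, dd_ne_top F _⟩]
        · refine le_iInf fun n => ?_
          have harg1 : 0 ≤ ut - ut/(n+2) := by
            have h1 : ut/((n:ℝ)+2) ≤ ut/1 := by
              apply div_le_div_of_nonneg_left hut0 one_pos
              · linarith [Nat.cast_nonneg (α := ℝ) n]
            simp only [div_one] at h1
            linarith
          have harg2 : ut - ut/(n+2) < ut := by
            have : (0:ℝ) < ut/(n+2) := by positivity
            linarith
          have hnotU : ut - ut/(n+2) ∉ U := fun hmem =>
            absurd (csInf_le hUbdd hmem) (not_le.2 harg2)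
          have : ¬ dd F (ut - ut/(n+2)) ≤ th := fun h => hnotU ⟨harg1, h⟩
          exact (not_le.1 this).le
        · intro m n
          have hcm : (m:ℝ) ≤ ((max m n : ℕ):ℝ) := by exact_mod_cast le_max_left m n
          have hcn : (n:ℝ) ≤ ((max m n : ℕ):ℝ) := by exact_mod_cast le_max_right m n
          have h1 : ut/(((max m n : ℕ):ℝ)+2) ≤ ut/((m:ℝ)+2) :=
            div_le_div_of_nonneg_left hut0 (by positivity) (by linarith)
          have h2 : ut/(((max m n : ℕ):ℝ)+2) ≤ ut/((n:ℝ)+2) :=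
            div_le_div_of_nonneg_left hut0 (by positivity) (by linarith)
          refine ⟨max m n, fun y hy => ?_, fun y hy => ?_⟩
          · simp only [Set.mem_setOf_eq] at *
            linarith
          · simp only [Set.mem_setOf_eq] at *
            linarith
    set L := {y | F y = ut} with hL
    have hLmeas : MeasurableSet L := measurableSet_eq_fun hF measurable_const
    set c := th - dd F ut with hc
    have hc_le : c ≤ μ01 L := by
      rw [hc, tsub_le_iff_left, dd_add_level hF]
      exact hbig
    have hmE_meas : Measurable (fun x => μ01 (L ∩ Set.Iic x)) :=
      Monotone.measurable (fun x y hxy =>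
        measure_mono (Set.inter_subset_inter_right _ (Set.Iic_subset_Iic.2 hxy)))
    have hsplit : {x | sHat F x ≤ th} =
        {x | ut < F x} ∪ {x | x ∈ L ∧ μ01 (L ∩ Set.Iic x) ≤ c} := by
      ext x
      simp only [Set.mem_setOf_eq, Set.mem_union]
      constructor
      · intro hx
        rcases lt_trichotomy (F x) ut with h | h | h
        · exfalso
          have hnotU : F x ∉ U := fun hmem => absurd (csInf_le hUbdd hmem) (not_le.2 h)
          have : ¬ dd F (F x) ≤ th := fun hle => hnotU ⟨hF0 x, hle⟩
          exact this (le_trans le_self_add hx)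
        · right
          have hrr : rr F x = μ01 (L ∩ Set.Iic x) := by
            rw [rr, hL]
            congr 2
            ext y
            simp [h]
          refine ⟨h, ?_⟩
          rw [← hrr, hc]
          apply ENNReal.le_sub_of_add_le_left (dd_ne_top F ut)
          calc dd F ut + rr F x = dd F (F x) + rr F x := by rw [h]
            _ = sHat F x := rfl
            _ ≤ th := hx
        · left; exact h
      · rintro (h | ⟨hxL, hxc⟩)
        · calc sHat F x ≤ dd F (F x) + μ01 {y | F y = F x} := add_le_add le_rfl (rr_le F x)
            _ = μ01 {y | F x ≤ F y} := dd_add_level hF (F x)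
            _ ≤ μ01 {y | ut < F y} := measure_mono (fun y hy => lt_of_lt_of_le h hy)
            _ = dd F ut := rfl
            _ ≤ th := hdd_ut
        · have hFx : F x = ut := hxL
          have hrr : rr F x = μ01 (L ∩ Set.Iic x) := by
            rw [rr, hL]
            congr 2
            ext y
            simp [hFx]
          calc sHat F x = dd F ut + rr F x := by rw [sHat, hFx]
            _ = dd F ut + μ01 (L ∩ Set.Iic x) := by rw [hrr]
            _ ≤ dd F ut + c := add_le_add le_rfl hxc
            _ = th := by rw [hc, add_tsub_cancel_of_le hdd_ut]
    have hdisj : Disjoint {x | ut < F x} {x | x ∈ L ∧ μ01 (L ∩ Set.Iic x) ≤ c} := by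
      rw [Set.disjoint_left]
      rintro x hx ⟨hxL, -⟩
      have : F x = ut := hxL
      simp only [Set.mem_setOf_eq, this] at hx
      exact lt_irrefl ut hx
    have hmeas2 : MeasurableSet {x | x ∈ L ∧ μ01 (L ∩ Set.Iic x) ≤ c} := by
      have : {x | x ∈ L ∧ μ01 (L ∩ Set.Iic x) ≤ c} =
          L ∩ (fun x => μ01 (L ∩ Set.Iic x)) ⁻¹' Set.Iic c := rfl
      rw [this]
      exact hLmeas.inter (hmE_meas measurableSet_Iic)
    rw [hsplit, measure_union hdisj hmeas2, flat_measure hLmeas hc_le]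
    show dd F ut + c = th
    rw [hc, add_tsub_cancel_of_le hdd_ut]

end MP
section Ryff

/-- Easy direction: `f*(σ(x)) ≤ |f(x)|` everywhere. -/
lemma decRearr_sF_le {f : ℝ → ℝ} (hf : Measurable f) (x : ℝ) :
    decRearr f (sF (fun y => |f y|) x) ≤ |f x| := by
  apply csInf_le ⟨0, fun s hs => hs.1⟩
  refine ⟨abs_nonneg _, ?_⟩
  rw [ofReal_sF hf.abs]
  exact le_self_add

/-- level sets with vanishing right tail inside the level set form a null set -/
lemma null_right_full {L : Set ℝ} : μ01 {x | x ∈ L ∧ μ01 (L ∩ Set.Ioi x) = 0} = 0 := by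
  set W := {x : ℝ | μ01 (L ∩ Set.Ioi x) = 0} with hW
  have hWup : ∀ x ∈ W, ∀ y, x ≤ y → y ∈ W := by
    intro x hx y hxy
    exact measure_mono_null (Set.inter_subset_inter_right _ (fun z hz => lt_of_le_of_lt hxy hz)) hx
  rcases Set.eq_empty_or_nonempty W with hWe | hWne
  · apply measure_mono_null (fun x hx => ?_) (measure_empty (μ := μ01))
    exact absurd (hWe ▸ hx.2 : x ∈ (∅ : Set ℝ)) (Set.notMem_empty x)
  by_cases hWbdd : BddBelow W
  · set β := sInf W with hβ
    have hsub : {x | x ∈ L ∧ μ01 (L ∩ Set.Ioi x) = 0} ⊆ (L ∩ Set.Ioi β) ∪ {β} := by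
      rintro x ⟨hxL, hx0⟩
      have hxW : x ∈ W := hx0
      have : β ≤ x := csInf_le hWbdd hxW
      rcases eq_or_lt_of_le this with h | h
      · right; exact h.symm
      · left; exact ⟨hxL, h⟩
    apply measure_mono_null hsub
    apply measure_union_null _ (measure_singleton β)
    have hdecomp : L ∩ Set.Ioi β ⊆ ⋃ n : ℕ, (L ∩ Set.Ioi (β + 1/(n+1))) := by
      rintro y ⟨hyL, hyβ⟩
      rw [Set.mem_Ioi] at hyβ
      obtain ⟨n, hn⟩ := exists_nat_one_div_lt (by linarith : 0 < y - β)
      exact Set.mem_iUnion.2 ⟨n, hyL, by simp only [Set.mem_Ioi]; linarith⟩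
    apply measure_mono_null hdecomp
    rw [measure_iUnion_null_iff]
    intro n
    have h1n : (0:ℝ) < 1/(n+1) := by positivity
    obtain ⟨w, hwW, hw⟩ := (csInf_lt_iff hWbdd hWne).mp (by linarith : sInf W < β + 1/(n+1))
    exact measure_mono_null
      (Set.inter_subset_inter_right _ (fun z hz => lt_trans hw hz)) hwW
  · have hL0 : μ01 L = 0 := by
      have hcov : L ⊆ ⋃ n : ℕ, (L ∩ Set.Ioi (-(n:ℝ))) := by
        intro y hy
        obtain ⟨n, hn⟩ := exists_nat_gt (-y)
        exact Set.mem_iUnion.2 ⟨n, hy, by simp only [Set.mem_Ioi]; linarith⟩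
      apply measure_mono_null hcov
      rw [measure_iUnion_null_iff]
      intro n
      rw [not_bddBelow_iff] at hWbdd
      obtain ⟨w, hwW, hw⟩ := hWbdd (-(n:ℝ))
      exact measure_mono_null
        (Set.inter_subset_inter_right _ (fun z hz => lt_trans hw hz)) hwW
    exact measure_mono_null (fun x hx => hx.1) hL0

/-- Hard direction of Ryff's theorem: `|f(x)| ≤ f*(σ(x))` almost everywhere. -/
lemma ryff_hard {f : ℝ → ℝ} (hf : Measurable f) :
    ∀ᵐ x ∂μ01, |f x| ≤ decRearr f (sF (fun y => |f y|) x) := by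
  set F : ℝ → ℝ := fun y => |f y| with hFdef
  have hF : Measurable F := hf.abs
  have hF0 : ∀ x, 0 ≤ F x := fun x => abs_nonneg _
  -- bad sets
  set N0 : Set ℝ := sF F ⁻¹' {0} with hN0def
  have hN0 : μ01 N0 = 0 := by
    rw [hN0def, ← Measure.map_apply (measurable_sF hF) (measurableSet_singleton 0),
      map_sF hF hF0]
    exact measure_singleton 0
  set A : Set ℝ := {u | 0 < μ01 {y | F y = u}} with hAdef
  have hA : A.Countable := Measure.countable_meas_level_set_pos hF
  set B : ℝ → Set ℝ := fun u => {x | x ∈ {y | F y = u} ∧ μ01 ({y | F y = u} ∩ Set.Ioi x) = 0}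
    with hBdef
  set N1 : Set ℝ := ⋃ u ∈ A, B u with hN1def
  have hN1 : μ01 N1 = 0 := by
    rw [hN1def, measure_biUnion_null_iff hA]
    intro u _
    exact null_right_full
  -- gap values
  set G : Set ℝ := {u | 0 < u ∧ μ01 {y | F y = u} = 0 ∧
    ∃ s, 0 ≤ s ∧ s < u ∧ μ01 {y | s < F y ∧ F y < u} = 0} with hGdef
  set N2 : Set ℝ := F ⁻¹' G with hN2def
  have hN2 : μ01 N2 = 0 := by
    classical
    set sfun : ℝ → ℝ := fun u =>
      if h : u ∈ G then h.2.2.choose else 0 with hsfun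
    have hsfun_spec : ∀ u ∈ G, 0 ≤ sfun u ∧ sfun u < u ∧
        μ01 {y | sfun u < F y ∧ F y < u} = 0 := by
      intro u hu
      simp only [hsfun, dif_pos hu]
      exact hu.2.2.choose_spec
    set I : ℝ → Set ℝ := fun u => if u ∈ G then Set.Ioo (sfun u) u else ∅ with hIdef
    have hIopen : ∀ u, IsOpen (I u) := by
      intro u
      simp only [hIdef]
      split
      · exact isOpen_Ioo
      · exact isOpen_empty
    have hInull : ∀ u, μ01 (F ⁻¹' I u) = 0 := by
      intro u
      simp only [hIdef]
      split
      · rename_i hu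
        have : F ⁻¹' Set.Ioo (sfun u) u = {y | sfun u < F y ∧ F y < u} := rfl
        rw [this]
        exact (hsfun_spec u hu).2.2
      · simp
    obtain ⟨T, hTc, hTeq⟩ := TopologicalSpace.isOpen_iUnion_countable I hIopen
    have hV : μ01 (F ⁻¹' ⋃ u, I u) = 0 := by
      rw [← hTeq]
      have : F ⁻¹' (⋃ u ∈ T, I u) = ⋃ u ∈ T, F ⁻¹' (I u) := by
        simp [Set.preimage_iUnion]
      rw [this, measure_biUnion_null_iff hTc]
      intro u _
      exact hInull u
    set C : Set ℝ := G \ (⋃ u, I u) with hCdef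
    have hCc : C.Countable := by
      have hq : ∀ u ∈ C, ∃ q : ℚ, sfun u < (q:ℝ) ∧ (q:ℝ) < u := by
        intro u hu
        exact exists_rat_btwn (hsfun_spec u hu.1).2.1
      set qf : ℝ → ℚ := fun u => if h : u ∈ C then (hq u h).choose else 0 with hqf
      have hqf_spec : ∀ u ∈ C, sfun u < (qf u : ℝ) ∧ ((qf u : ℝ)) < u := by
        intro u hu
        simp only [hqf, dif_pos hu]
        exact (hq u hu).choose_spec
      have key : ∀ u ∈ C, ∀ v ∈ C, u < v → (qf u : ℝ) < (qf v : ℝ) := by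
        intro u hu v hv hlt
        have huV : u ∉ (⋃ w, I w) := hu.2
        have hnI : u ∉ I v := fun h => huV (Set.mem_iUnion.2 ⟨v, h⟩)
        rw [hIdef] at hnI
        simp only [if_pos hv.1, Set.mem_Ioo] at hnI
        push_neg at hnI
        have h1 : (qf u : ℝ) < u := (hqf_spec u hu).2
        have h2 : sfun v < (qf v : ℝ) := (hqf_spec v hv).1
        have h3 : u ≤ sfun v := by
          by_contra hcon
          push_neg at hcon
          exact absurd (hnI hcon) (not_le.2 hlt)
        linarith
      apply Set.countable_of_injective_of_countable_image
        (f := qf) ?_ (Set.to_countable _)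
      intro u hu v hv huv
      rcases lt_trichotomy u v with h | h | h
      · exfalso
        have := key u hu v hv h
        rw [huv] at this
        exact lt_irrefl _ this
      · exact h
      · exfalso
        have := key v hv u hu h
        rw [huv] at this
        exact lt_irrefl _ this
    have hC : μ01 (F ⁻¹' C) = 0 := by
      have hsub : F ⁻¹' C ⊆ ⋃ u ∈ C, {y | F y = u} := by
        intro y hy
        exact Set.mem_biUnion hy rfl
      apply measure_mono_null hsub
      rw [measure_biUnion_null_iff hCc]
      intro u hu
      exact hu.1.2.1
    have hsub : N2 ⊆ F ⁻¹' (⋃ u, I u) ∪ F ⁻¹' C := by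
      intro x hx
      by_cases hxV : F x ∈ (⋃ u, I u)
      · exact Or.inl hxV
      · exact Or.inr ⟨hx, hxV⟩
    exact measure_mono_null hsub (measure_union_null hV hC)
  -- assemble
  rw [ae_iff]
  apply measure_mono_null ?_ (measure_union_null (measure_union_null hN0 hN1) hN2)
  intro x hx
  simp only [Set.mem_setOf_eq, not_le] at hx
  by_contra hxN
  simp only [Set.mem_union] at hxN
  push_neg at hxN
  obtain ⟨⟨hxN0, hxN1⟩, hxN2⟩ := hxN
  -- x is good; derive contradiction
  have hsHat_ne : sHat F x ≠ 0 := by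
    intro h
    apply hxN0
    simp only [hN0def, Set.mem_preimage, Set.mem_singleton_iff, sF, h, ENNReal.toReal_zero]
  have hlb : |f x| ≤ decRearr f (sF F x) := by
    apply le_csInf
    · obtain ⟨n, hn⟩ := exists_dd_lt hF (pos_iff_ne_zero.2 hsHat_ne)
      refine ⟨n, Nat.cast_nonneg n, ?_⟩
      rw [ofReal_sF hF]
      exact hn.le
    · rintro s ⟨hs0, hsdd⟩
      rw [ofReal_sF hF] at hsdd
      by_contra hc
      push_neg at hc
      -- s < F x
      have hu_pos : 0 < F x := lt_of_le_of_lt hs0 hc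
      set L := {y | F y = F x} with hL
      set M := {y | s < F y ∧ F y < F x} with hM
      have hLmeas : MeasurableSet L := measurableSet_eq_fun hF measurable_const
      have hsHat_eq : sHat F x = dd F (F x) + rr F x := rfl
      have hrr_eq_L : rr F x = μ01 (L ∩ Set.Iic x) := rfl
      have hdecomp : dd F s = dd F (F x) + μ01 L + μ01 M := by
        have hset : {y | s < F y} = ({y | F x < F y} ∪ L) ∪ M := by
          ext y
          simp only [Set.mem_union, Set.mem_setOf_eq, hL, hM]
          constructor
          · intro hy
            rcases lt_trichotomy (F y) (F x) with h | h | h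
            · exact Or.inr ⟨hy, h⟩
            · exact Or.inl (Or.inr h)
            · exact Or.inl (Or.inl h)
          · rintro ((h | h) | h)
            · linarith
            · rw [h]; exact hc
            · exact h.1
        have hd1 : Disjoint {y | F x < F y} L := by
          rw [Set.disjoint_left]
          intro y hy hyL
          have hy' : F x < F y := hy
          have hyL' : F y = F x := hyL
          linarith
        have hd2 : Disjoint ({y | F x < F y} ∪ L) M := by
          rw [Set.disjoint_left]
          rintro y (hy | hy) hyM
          · have hy' : F x < F y := hy
            have hyM' : F y < F x := hyM.2
            linarith
          · have hy' : F y = F x := hy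
            have hyM' : F y < F x := hyM.2
            linarith
        have hMmeas : MeasurableSet M :=
          (measurableSet_lt measurable_const hF).inter (measurableSet_lt hF measurable_const)
        rw [dd, hset, measure_union hd2 hMmeas, measure_union hd1 hLmeas]
        rfl
      have h1 : dd F (F x) + (μ01 L + μ01 M) ≤ dd F (F x) + rr F x := by
        have hdds : dd F s = μ01 {x | s < |f x|} := rfl
        rw [← hdds, hdecomp, hsHat_eq] at hsdd
        rwa [← add_assoc]
      have h2 : μ01 L + μ01 M ≤ rr F x :=
        (ENNReal.add_le_add_iff_left (dd_ne_top F (F x))).1 h1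
      have hrrL : rr F x ≤ μ01 L := measure_mono Set.inter_subset_left
      have hM0 : μ01 M = 0 := by
        have h3 : μ01 L + μ01 M ≤ μ01 L + 0 := by
          rw [add_zero]
          exact h2.trans hrrL
        have := (ENNReal.add_le_add_iff_left (measure_ne_top μ01 L)).1 h3
        exact le_antisymm this zero_le
      have hrr_eq : rr F x = μ01 L :=
        le_antisymm hrrL (le_trans le_self_add h2)
      by_cases hL0 : μ01 L = 0
      · exact hxN2 ⟨hu_pos, hL0, s, hs0, hc, hM0⟩
      · apply hxN1
        have hAu : F x ∈ A := pos_iff_ne_zero.2 hL0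
        have hIoi : μ01 (L ∩ Set.Ioi x) = 0 := by
          have hsplitL : μ01 L = μ01 (L ∩ Set.Iic x) + μ01 (L ∩ Set.Ioi x) := by
            rw [← measure_union ?_ (hLmeas.inter measurableSet_Ioi)]
            · rw [← Set.inter_union_distrib_left, Set.Iic_union_Ioi, Set.inter_univ]
            · exact Set.disjoint_left.2 fun z hz hz' =>
                absurd (Set.mem_Ioi.1 hz'.2) (not_lt.2 (Set.mem_Iic.1 hz.2))
          have h4 : μ01 L + 0 = μ01 L + μ01 (L ∩ Set.Ioi x) := by
            rw [add_zero]
            nth_rewrite 1 [hsplitL]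
            rw [← hrr_eq_L, hrr_eq]
          exact ((ENNReal.add_right_inj (measure_ne_top μ01 L)).1 h4).symm
        exact Set.mem_biUnion hAu ⟨rfl, hIoi⟩
  exact absurd hlb (not_le.2 hx)

end Ryff
section Density

lemma sF_zero_null {F : ℝ → ℝ} (hF : Measurable F) (hF0 : ∀ x, 0 ≤ F x) :
    μ01 (sF F ⁻¹' {0}) = 0 := by
  rw [← Measure.map_apply (measurable_sF hF) (measurableSet_singleton 0), map_sF hF hF0]
  exact measure_singleton 0

lemma decRearr_nonneg (f : ℝ → ℝ) (t : ℝ) : 0 ≤ decRearr f t :=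
  Real.sInf_nonneg (fun x hx => hx.1)

/-- measurable antitone modification of `ofReal ∘ decRearr f` -/
def KFun (f : ℝ → ℝ) : ℝ → ℝ≥0∞ :=
  fun t => if t ≤ 0 then ⊤ else ENNReal.ofReal (decRearr f t)

lemma KFun_anti {f : ℝ → ℝ} (hf : Measurable f) : Antitone (KFun f) := by
  intro t t' htt'
  unfold KFun
  by_cases ht : t ≤ 0
  · rw [if_pos ht]; exact le_top
  · push_neg at ht
    have ht' : ¬ t' ≤ 0 := fun h => absurd (lt_of_lt_of_le ht (htt'.trans h)) (lt_irrefl 0)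
    rw [if_neg (not_le.2 ht), if_neg ht']
    apply ENNReal.ofReal_le_ofReal
    apply csInf_le_csInf ⟨0, fun x hx => hx.1⟩
    · obtain ⟨n, hn⟩ := exists_dd_lt hf.abs (ENNReal.ofReal_pos.2 ht)
      exact ⟨n, Nat.cast_nonneg n, hn.le⟩
    · rintro s ⟨hs0, hsle⟩
      exact ⟨hs0, hsle.trans (ENNReal.ofReal_le_ofReal htt')⟩

lemma KFun_ae_eq {f : ℝ → ℝ} :
    (fun t => ENNReal.ofReal (decRearr f t)) =ᵐ[μ01] KFun f := by
  rw [Filter.EventuallyEq, ae_iff]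
  have h0 : μ01 (Set.Iic 0) = 0 := by
    rw [mu01_apply]
    have : Set.Iic (0:ℝ) ∩ Set.Icc 0 1 = {0} := by
      ext z
      simp only [Set.mem_inter_iff, Set.mem_Iic, Set.mem_Icc, Set.mem_singleton_iff]
      constructor
      · rintro ⟨h1, h2, _⟩; linarith
      · rintro rfl; norm_num
    rw [this]
    exact measure_singleton 0
  apply measure_mono_null ?_ h0
  intro t ht
  simp only [Set.mem_setOf_eq, KFun] at ht
  rw [Set.mem_Iic]
  by_contra htI
  push_neg at htI
  rw [if_neg (not_le.2 htI)] at ht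
  exact ht rfl

/-- pull back an a.e. property along a measure-preserving map -/
lemma ae_comp_of_map_eq {σ : ℝ → ℝ} (hσ : Measurable σ)
    (hmap : Measure.map σ μ01 = μ01) {P : ℝ → Prop}
    (h : ∀ᵐ t ∂μ01, P t) : ∀ᵐ x ∂μ01, P (σ x) := by
  rw [ae_iff] at h ⊢
  obtain ⟨S, hSsub, hSmeas, hSnull⟩ := exists_measurable_superset_of_null h
  apply measure_mono_null (fun x hx => hSsub hx : {x | ¬ P (σ x)} ⊆ σ ⁻¹' S)
  rw [← hmap, Measure.map_apply hσ hSmeas] at hSnull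
  exact hSnull

lemma eLpNorm_comp_mp {σ h : ℝ → ℝ} (p : ℝ≥0∞) (hσ : Measurable σ)
    (hmap : Measure.map σ μ01 = μ01) (hh : Measurable h) :
    eLpNorm (fun x => h (σ x)) p μ01 = eLpNorm h p μ01 := by
  have := eLpNorm_map_measure (p := p) (μ := μ01) (f := σ) (g := h)
    (hh.stronglyMeasurable.aestronglyMeasurable (μ := Measure.map σ μ01)) hσ.aemeasurable
  rw [hmap] at this
  exact this.symm

lemma eLpNorm_one_le_top (h : ℝ → ℝ) : eLpNorm h 1 μ01 ≤ eLpNorm h ⊤ μ01 := by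
  rw [eLpNorm_one_eq_lintegral_enorm, eLpNorm_exponent_top, eLpNormEssSup]
  calc ∫⁻ x, ‖h x‖ₑ ∂μ01
      ≤ ∫⁻ _, essSup (fun x => ‖h x‖ₑ) μ01 ∂μ01 :=
        lintegral_mono_ae (ENNReal.ae_le_essSup _)
    _ = essSup (fun x => ‖h x‖ₑ) μ01 := by
        rw [lintegral_const, mu01_univ, mul_one]

/-- Monotonicity of the cost term. -/
lemma cost_term_mono {φ ψ : ℝ → ℝ} (hφ : IsPhi φ) (hψ : IsPsi ψ) (n : ℕ)
    {A' A B : ℝ≥0∞} (hA : A ≠ ⊤) (hA'A : A' ≤ A) (hBA' : B ≤ A') :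
    ENNReal.ofReal (ψ ((n:ℝ)+1) * A'.toReal * φ ((B/A').toReal)) ≤
    ENNReal.ofReal (ψ ((n:ℝ)+1) * A.toReal * φ ((B/A).toReal)) := by
  have hA'ne : A' ≠ ⊤ := (lt_of_le_of_lt hA'A (lt_top_iff_ne_top.2 hA)).ne
  have hBne : B ≠ ⊤ := (lt_of_le_of_lt hBA' (lt_top_iff_ne_top.2 hA'ne)).ne
  set a' := A'.toReal with ha'
  set a := A.toReal with ha
  set b := B.toReal with hb
  have hb0 : 0 ≤ b := ENNReal.toReal_nonneg
  have hba' : b ≤ a' := ENNReal.toReal_mono hA'ne hBA'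
  have ha'a : a' ≤ a := ENNReal.toReal_mono hA hA'A
  have ha'0 : 0 ≤ a' := ENNReal.toReal_nonneg
  have hψn : 0 ≤ ψ ((n:ℝ)+1) := (hψ.pos _ (by positivity)).le
  rw [ENNReal.toReal_div, ENNReal.toReal_div, ← ha', ← ha, ← hb]
  apply ENNReal.ofReal_le_ofReal
  rw [mul_assoc, mul_assoc]
  apply mul_le_mul_of_nonneg_left ?_ hψn
  -- core : a' * φ (b/a') ≤ a * φ (b/a)
  rcases eq_or_lt_of_le ha'0 with ha'z | ha'pos
  · -- a' = 0, hence b = 0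
    have hbz : b = 0 := le_antisymm (ha'z ▸ hba') hb0
    rw [← ha'z, hbz]
    simp [hφ.zero]
  · have hapos : 0 < a := lt_of_lt_of_le ha'pos ha'a
    have hmem1 : b / a' ∈ Set.Icc (0:ℝ) 1 :=
      ⟨div_nonneg hb0 ha'pos.le, (div_le_one ha'pos).2 hba'⟩
    have hmem0 : (0:ℝ) ∈ Set.Icc (0:ℝ) 1 := by norm_num
    have hw1 : 0 ≤ a'/a := div_nonneg ha'pos.le hapos.le
    have hw2 : 0 ≤ 1 - a'/a := by
      have : a'/a ≤ 1 := (div_le_one hapos).2 ha'a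
      linarith
    have hconc := hφ.concave.2 hmem1 hmem0 hw1 hw2 (by ring)
    simp only [smul_eq_mul, mul_zero, add_zero] at hconc
    have hcomb : a'/a * (b/a') = b/a := by
      field_simp
    rw [hcomb] at hconc
    have hzero : (1 - a'/a) * φ 0 = 0 := by rw [hφ.zero, mul_zero]
    rw [hzero, add_zero] at hconc
    have h5 : a * (a'/a) = a' := by field_simp
    calc a' * φ (b/a') = a * (a'/a) * φ (b/a') := by rw [h5]
      _ = a * (a'/a * φ (b/a')) := by ring
      _ ≤ a * φ (b/a) := mul_le_mul_of_nonneg_left hconc hapos.le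

end Density
section Key

lemma decRearr_congr {f g : ℝ → ℝ}
    (hequi : ∀ s : ℝ, 0 ≤ s → μ01 {x | s < |f x|} = μ01 {x | s < |g x|}) :
    decRearr f = decRearr g := by
  funext t
  unfold decRearr
  congr 1
  ext s
  simp only [Set.mem_setOf_eq]
  constructor
  · rintro ⟨hs0, hle⟩; exact ⟨hs0, (hequi s hs0) ▸ hle⟩
  · rintro ⟨hs0, hle⟩; exact ⟨hs0, (hequi s hs0).symm ▸ hle⟩

set_option maxHeartbeats 2000000 in
lemma key_ineq {φ ψ : ℝ → ℝ} (hφ : IsPhi φ) (hψ : IsPsi ψ)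
    {f g : ℝ → ℝ} (hf : Measurable f) (hg : Measurable g)
    (hequi : ∀ s : ℝ, 0 ≤ s → μ01 {x | s < |f x|} = μ01 {x | s < |g x|}) :
    QANorm φ ψ g ≤ QANorm φ ψ f := by
  rw [QANorm, QANorm]
  refine le_iInf fun fn => le_iInf fun hfn => ?_
  obtain ⟨hfn_meas, hfn_top, hfn_pos, hfn_dom⟩ := hfn
  set F : ℝ → ℝ := fun x => |f x| with hFdef
  set Gf : ℝ → ℝ := fun x => |g x| with hGdef
  have hF : Measurable F := hf.abs
  have hG : Measurable Gf := hg.abs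
  have hF0 : ∀ x, 0 ≤ F x := fun x => abs_nonneg _
  have hG0 : ∀ x, 0 ≤ Gf x := fun x => abs_nonneg _
  have hmapF : Measure.map (sF F) μ01 = μ01 := map_sF hF hF0
  have hmapG : Measure.map (sF Gf) μ01 = μ01 := map_sF hG hG0
  set ν : ℕ → Measure ℝ := fun n =>
    Measure.map (sF F) (μ01.withDensity (fun y => ENNReal.ofReal (fn n y))) with hνdef
  have hν_apply : ∀ n (A : Set ℝ), MeasurableSet A →
      ν n A = ∫⁻ y in (sF F) ⁻¹' A, ENNReal.ofReal (fn n y) ∂μ01 := by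
    intro n A hA
    rw [hνdef]
    rw [Measure.map_apply (measurable_sF hF) hA, withDensity_apply _ ((measurable_sF hF) hA)]
  have hpre_eq : ∀ (A : Set ℝ), MeasurableSet A → μ01 ((sF F) ⁻¹' A) = μ01 A := by
    intro A hA
    rw [← Measure.map_apply (measurable_sF hF) hA, hmapF]
  set C : ℕ → ℝ≥0∞ := fun n => eLpNorm (fn n) ⊤ μ01 with hCdef
  have hC_ne : ∀ n, C n ≠ ⊤ := fun n => (hfn_top n).ne
  have hfn_bound : ∀ n, ∀ᵐ y ∂μ01, ENNReal.ofReal (fn n y) ≤ C n := by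
    intro n
    have h1 := ENNReal.ae_le_essSup (μ := μ01) (fun y => ‖fn n y‖ₑ)
    filter_upwards [h1] with y hy
    rw [hCdef]
    simp only [eLpNorm_exponent_top, eLpNormEssSup]
    rwa [Real.enorm_eq_ofReal (hfn_pos n y)] at hy
  have hν_le : ∀ n (A : Set ℝ), MeasurableSet A → ν n A ≤ C n * μ01 A := by
    intro n A hA
    rw [hν_apply n A hA]
    calc ∫⁻ y in (sF F)⁻¹' A, ENNReal.ofReal (fn n y) ∂μ01
        ≤ ∫⁻ _ in (sF F)⁻¹' A, C n ∂μ01 :=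
          setLIntegral_mono_ae aemeasurable_const
            (by filter_upwards [hfn_bound n] with y hy _; exact hy)
      _ = C n * μ01 ((sF F)⁻¹' A) := setLIntegral_const _ _
      _ = C n * μ01 A := by rw [hpre_eq A hA]
  have hνfin : ∀ n, IsFiniteMeasure (ν n) := by
    intro n
    constructor
    have := hν_le n Set.univ MeasurableSet.univ
    rw [mu01_univ, mul_one] at this
    exact lt_of_le_of_lt this (hfn_top n)
  have hac : ∀ n, ν n ≪ μ01 := by
    intro n
    refine Measure.AbsolutelyContinuous.mk fun A hA hA0 => ?_
    rw [hν_apply n A hA]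
    have hpre0 : μ01 ((sF F)⁻¹' A) = 0 := by rw [hpre_eq A hA]; exact hA0
    exact setLIntegral_measure_zero _ _ hpre0
  set k : ℕ → ℝ → ℝ≥0∞ := fun n => (ν n).rnDeriv μ01 with hkdef
  have hk_meas : ∀ n, Measurable (k n) := fun n => Measure.measurable_rnDeriv _ _
  have hνk : ∀ n, μ01.withDensity (k n) = ν n := by
    intro n
    haveI := hνfin n
    exact Measure.withDensity_rnDeriv_eq _ _ (hac n)
  have hk_int : ∀ n (A : Set ℝ), MeasurableSet A → ∫⁻ t in A, k n t ∂μ01 = ν n A := by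
    intro n A hA
    rw [← withDensity_apply _ hA, hνk n]
  have hk_fin : ∀ n, ∀ᵐ t ∂μ01, k n t < ⊤ := by
    intro n
    haveI := hνfin n
    exact Measure.rnDeriv_lt_top (ν n) μ01
  have hk_le : ∀ n, k n ≤ᵐ[μ01] (fun _ => C n) := by
    intro n
    apply ae_le_of_forall_setLIntegral_le_of_sigmaFinite (hk_meas n)
    intro A hA _
    rw [hk_int n A hA, setLIntegral_const]
    exact hν_le n A hA
  set h : ℕ → ℝ → ℝ := fun n t => (k n t).toReal with hhdef
  have hh_meas : ∀ n, Measurable (h n) := fun n => (hk_meas n).ennreal_toReal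
  have hh_pos : ∀ n t, 0 ≤ h n t := fun n t => ENNReal.toReal_nonneg
  have hofReal_h : ∀ n, ∀ᵐ t ∂μ01, ENNReal.ofReal (h n t) = k n t := by
    intro n
    filter_upwards [hk_fin n] with t ht
    exact ENNReal.ofReal_toReal ht.ne
  have hnnorm_h : ∀ n, ∀ᵐ t ∂μ01, ‖h n t‖ₑ = k n t := by
    intro n
    filter_upwards [hofReal_h n] with t ht
    rw [Real.enorm_eq_ofReal (hh_pos n t)]
    exact ht
  have hh_top : ∀ n, eLpNorm (h n) ⊤ μ01 ≤ C n := by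
    intro n
    rw [eLpNorm_exponent_top, eLpNormEssSup]
    refine essSup_le_of_ae_le _ ?_
    filter_upwards [hnnorm_h n, hk_le n] with t h1 h2
    rw [h1]
    exact h2
  have hh_one : ∀ n, eLpNorm (h n) 1 μ01 = eLpNorm (fn n) 1 μ01 := by
    intro n
    rw [eLpNorm_one_eq_lintegral_enorm, eLpNorm_one_eq_lintegral_enorm]
    calc ∫⁻ t, ‖h n t‖ₑ ∂μ01
        = ∫⁻ t, k n t ∂μ01 := lintegral_congr_ae (hnnorm_h n)
      _ = ν n Set.univ := by rw [← setLIntegral_univ (k n), hk_int n Set.univ MeasurableSet.univ]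
      _ = ∫⁻ y in (sF F)⁻¹' Set.univ, ENNReal.ofReal (fn n y) ∂μ01 :=
          hν_apply n _ MeasurableSet.univ
      _ = ∫⁻ y, ENNReal.ofReal (fn n y) ∂μ01 := by rw [Set.preimage_univ, setLIntegral_univ]
      _ = ∫⁻ y, ‖fn n y‖ₑ ∂μ01 :=
          lintegral_congr_ae (Filter.Eventually.of_forall fun y =>
            (Real.enorm_eq_ofReal (hfn_pos n y)).symm)
  -- density domination
  have hKle : KFun f ≤ᵐ[μ01] fun t => ∑' i : ℕ, k i t := by
    apply ae_le_of_forall_setLIntegral_le_of_sigmaFinite ((KFun_anti hf).measurable)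
    intro A hA _
    have hKσ : ∀ᵐ x ∂μ01, KFun f (sF F x) ≤ ∑' i : ℕ, ENNReal.ofReal (fn i x) := by
      have hz := sF_zero_null hF hF0
      have hdom := hfn_dom
      rw [ae_iff] at hdom ⊢
      apply measure_mono_null ?_ (measure_union_null hz hdom)
      intro x hx
      simp only [Set.mem_setOf_eq] at hx
      by_contra hxn
      simp only [Set.mem_union, Set.mem_preimage, Set.mem_singleton_iff, Set.mem_setOf_eq] at hxn
      push_neg at hxn
      obtain ⟨hx0, hxd⟩ := hxn
      apply hx
      have hsF_pos : 0 < sF F x := lt_of_le_of_ne (sF_nonneg F x) (Ne.symm hx0)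
      calc KFun f (sF F x) = ENNReal.ofReal (decRearr f (sF F x)) := by
            rw [KFun, if_neg (not_le.2 hsF_pos)]
        _ ≤ ENNReal.ofReal (F x) := ENNReal.ofReal_le_ofReal (decRearr_sF_le hf x)
        _ ≤ ∑' i, ENNReal.ofReal (fn i x) := hxd
    calc ∫⁻ t in A, KFun f t ∂μ01
        = ∫⁻ x in (sF F)⁻¹' A, KFun f (sF F x) ∂μ01 := by
          conv_lhs => rw [← hmapF]
          exact setLIntegral_map hA (KFun_anti hf).measurable (measurable_sF hF)
      _ ≤ ∫⁻ x in (sF F)⁻¹' A, ∑' i : ℕ, ENNReal.ofReal (fn i x) ∂μ01 :=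
          setLIntegral_mono_ae
            ((AEMeasurable.ennreal_tsum fun i => (hfn_meas i).ennreal_ofReal).restrict)
            (by filter_upwards [hKσ] with x hx _; exact hx)
      _ = ∑' i : ℕ, ∫⁻ x in (sF F)⁻¹' A, ENNReal.ofReal (fn i x) ∂μ01 :=
          lintegral_tsum fun i => ((hfn_meas i).ennreal_ofReal).restrict
      _ = ∑' i : ℕ, ν i A := tsum_congr fun i => (hν_apply i A hA).symm
      _ = ∑' i : ℕ, ∫⁻ t in A, k i t ∂μ01 := tsum_congr fun i => (hk_int i A hA).symm
      _ = ∫⁻ t in A, ∑' i : ℕ, k i t ∂μ01 :=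
          (lintegral_tsum fun i => (hk_meas i).aemeasurable.restrict).symm
  have hγ : ∀ᵐ t ∂μ01, ENNReal.ofReal (decRearr f t) ≤ ∑' i : ℕ, k i t := by
    filter_upwards [hKle, KFun_ae_eq (f := f)] with t h1 h2
    rw [h2]
    exact h1
  have hδ : ∀ᵐ x ∂μ01, ENNReal.ofReal (decRearr f (sF Gf x)) ≤ ∑' i : ℕ, k i (sF Gf x) :=
    ae_comp_of_map_eq (measurable_sF hG) hmapG hγ
  have hεσ : ∀ᵐ x ∂μ01, ∀ n : ℕ, ENNReal.ofReal (h n (sF Gf x)) = k n (sF Gf x) :=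
    ae_comp_of_map_eq (measurable_sF hG) hmapG (ae_all_iff.2 hofReal_h)
  have hhard := ryff_hard hg
  have hfg : decRearr f = decRearr g := decRearr_congr hequi
  set H : ℕ → ℝ → ℝ := fun n x => h n (sF Gf x) with hHdef
  have hH_topEq : ∀ n, eLpNorm (H n) ⊤ μ01 = eLpNorm (h n) ⊤ μ01 := fun n =>
    eLpNorm_comp_mp ⊤ (measurable_sF hG) hmapG (hh_meas n)
  have hH_oneEq : ∀ n, eLpNorm (H n) 1 μ01 = eLpNorm (h n) 1 μ01 := fun n =>
    eLpNorm_comp_mp 1 (measurable_sF hG) hmapG (hh_meas n)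
  have hH_adm : Admissible g H := by
    refine ⟨fun n => ((hh_meas n).comp (measurable_sF hG)).aemeasurable,
      fun n => ?_, fun n x => hh_pos n _, ?_⟩
    · rw [hH_topEq n]
      exact lt_of_le_of_lt (hh_top n) (hfn_top n)
    · filter_upwards [hδ, hεσ, hhard] with x h1 h2 h3
      calc ENNReal.ofReal |g x|
          ≤ ENNReal.ofReal (decRearr g (sF Gf x)) := ENNReal.ofReal_le_ofReal h3
        _ = ENNReal.ofReal (decRearr f (sF Gf x)) := by rw [hfg]
        _ ≤ ∑' i : ℕ, k i (sF Gf x) := h1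
        _ = ∑' i : ℕ, ENNReal.ofReal (H i x) := (tsum_congr fun i => (h2 i)).symm
  calc (⨅ gs, ⨅ _ : Admissible g gs, seqCost φ ψ gs) ≤ seqCost φ ψ H := iInf₂_le H hH_adm
    _ ≤ seqCost φ ψ fn := by
      rw [seqCost, seqCost]
      apply ENNReal.tsum_le_tsum
      intro n
      have hBeq : eLpNorm (H n) 1 μ01 = eLpNorm (fn n) 1 μ01 := by
        rw [hH_oneEq n, hh_one n]
      rw [hBeq]
      apply cost_term_mono hφ hψ n (hC_ne n)
      · rw [hH_topEq n]
        exact hh_top n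
      · rw [← hBeq]
        exact eLpNorm_one_le_top (H n)

lemma Admissible_congr {f f' : ℝ → ℝ} (h : ∀ᵐ x ∂μ01, f x = f' x) (gs : ℕ → ℝ → ℝ) :
    Admissible f gs → Admissible f' gs := by
  rintro ⟨h1, h2, h3, h4⟩
  refine ⟨h1, h2, h3, ?_⟩
  filter_upwards [h, h4] with x hx h4x
  rwa [← hx]

lemma QANorm_congr_ae {φ ψ f f' : ℝ → ℝ} (h : ∀ᵐ x ∂μ01, f x = f' x) :
    QANorm φ ψ f = QANorm φ ψ f' := by
  rw [QANorm, QANorm]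
  apply le_antisymm
  · exact le_iInf fun gs => le_iInf fun hgs =>
      iInf₂_le gs (Admissible_congr (h.mono fun x hx => hx.symm) gs hgs)
  · exact le_iInf fun gs => le_iInf fun hgs =>
      iInf₂_le gs (Admissible_congr h gs hgs)

end Key
/-- `QA_{φ,ψ}` is rearrangement invariant: equimeasurable functions have
the same quasi-norm. -/
theorem stmt6 {φ ψ : ℝ → ℝ} (hφ : IsPhi φ) (hψ : IsPsi ψ)
    (f g : ℝ → ℝ) (hf : AEMeasurable f μ01) (hg : AEMeasurable g μ01)
    (hequi : ∀ s : ℝ, 0 ≤ s → μ01 {x | s < |f x|} = μ01 {x | s < |g x|}) :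
    QANorm φ ψ f = QANorm φ ψ g := by
  have heqf : ∀ᵐ x ∂μ01, f x = hf.mk f x := hf.ae_eq_mk
  have heqg : ∀ᵐ x ∂μ01, g x = hg.mk g x := hg.ae_eq_mk
  have hf' : Measurable (hf.mk f) := hf.measurable_mk
  have hg' : Measurable (hg.mk g) := hg.measurable_mk
  have e1 : ∀ s : ℝ, μ01 {x | s < |hf.mk f x|} = μ01 {x | s < |f x|} := by
    intro s
    apply measure_congr
    filter_upwards [heqf] with x hx
    change (s < |hf.mk f x|) = (s < |f x|)
    rw [hx]
  have e2 : ∀ s : ℝ, μ01 {x | s < |hg.mk g x|} = μ01 {x | s < |g x|} := by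
    intro s
    apply measure_congr
    filter_upwards [heqg] with x hx
    change (s < |hg.mk g x|) = (s < |g x|)
    rw [hx]
  have hequi' : ∀ s : ℝ, 0 ≤ s →
      μ01 {x | s < |hf.mk f x|} = μ01 {x | s < |hg.mk g x|} := by
    intro s hs
    rw [e1 s, e2 s]
    exact hequi s hs
  rw [QANorm_congr_ae heqf, QANorm_congr_ae heqg]
  exact le_antisymm
    (key_ineq hφ hψ hg' hf' (fun s hs => (hequi' s hs).symm))
    (key_ineq hφ hψ hf' hg' hequi')
end
end
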